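/- Fix p ∈ (0,1) and α_min(p) := Φ⁻¹((1+p)/2). Among all measurable sets A ⊆ ℝ with Gaussian measure ∫_A φ(t)dt = p, the minimum of ∫_A t²·φ(t)dt equals p − 2·α_min(p)·φ(α_min(p)), attained (up to null sets) by A = [−α_min(p), α_min(p)]. -/

import Mathlib

open MeasureTheory

/-- Standard normal pdf. -/
noncomputable def gpdf (x : ℝ) : ℝ := (Real.sqrt (2 * Real.pi))⁻¹ * Real.exp (-x ^ 2 / 2)

open Set
lemma gpdf_eq (x : ℝ) : gpdf x = (Real.sqrt (2 * Real.pi))⁻¹ * Real.exp (-(1/2 : ℝ) * x ^ 2) := by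
  unfold gpdf; ring_nf

lemma gpdf_pos (x : ℝ) : 0 < gpdf x := by
  unfold gpdf
  positivity

lemma gpdf_neg (x : ℝ) : gpdf (-x) = gpdf x := by unfold gpdf; ring_nf

lemma gpdf_integrable : Integrable gpdf := by
  have := (integrable_exp_neg_mul_sq (by norm_num : (0:ℝ) < 1/2)).const_mul
    (Real.sqrt (2 * Real.pi))⁻¹
  refine this.congr ?_
  filter_upwards with x using (gpdf_eq x).symm

lemma sq_gpdf_integrable : Integrable (fun x => x ^ 2 * gpdf x) := by
  have h := (integrable_rpow_mul_exp_neg_mul_sq (by norm_num : (0:ℝ) < 1/2)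
    (by norm_num : (-1:ℝ) < 2)).const_mul (Real.sqrt (2 * Real.pi))⁻¹
  refine h.congr ?_
  filter_upwards with x
  rw [gpdf_eq]
  rw [Real.rpow_two]; ring

lemma integral_gpdf : ∫ x, gpdf x = 1 := by
  have h : ∫ x : ℝ, Real.exp (-(1/2:ℝ) * x ^ 2) = Real.sqrt (Real.pi / (1/2)) :=
    integral_gaussian (1/2)
  have : ∫ x, gpdf x = (Real.sqrt (2 * Real.pi))⁻¹ * Real.sqrt (Real.pi / (1/2)) := by
    rw [← h, ← integral_const_mul]
    congr 1; ext x; exact gpdf_eq x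
  rw [this, show Real.pi / (1/2) = 2 * Real.pi by ring]
  rw [inv_mul_cancel₀]
  positivity


/-- Standard normal cdf. -/
noncomputable def gcdf (x : ℝ) : ℝ := ∫ t in Set.Iic x, gpdf t

open Set
lemma gcdf_neg (x : ℝ) : gcdf (-x) = 1 - gcdf x := by
  have h1 : (∫ t in Iic (-x), gpdf (-t)) = ∫ t in Ioi x, gpdf t := by
    simpa using integral_comp_neg_Iic (-x) gpdf
  have h1' : gcdf (-x) = ∫ t in Ioi x, gpdf t := by
    rw [← h1]; unfold gcdf; simp_rw [gpdf_neg]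
  have h2 : gcdf x + (∫ t in Ioi x, gpdf t) = 1 := by
    rw [← integral_gpdf]
    exact intervalIntegral.integral_Iic_add_Ioi gpdf_integrable.integrableOn gpdf_integrable.integrableOn
  linarith

lemma gcdf_mono : Monotone gcdf := fun a b hab =>
  setIntegral_mono_set gpdf_integrable.integrableOn
    (ae_of_all _ fun x => (gpdf_pos x).le)
    (HasSubset.Subset.eventuallyLE (Iic_subset_Iic.2 hab))

lemma icc_gpdf (α : ℝ) (h : 0 ≤ α) : (∫ t in Icc (-α) α, gpdf t) = 2 * gcdf α - 1 := by
  have h1 : gcdf α - gcdf (-α) = ∫ t in (-α)..α, gpdf t :=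
    intervalIntegral.integral_Iic_sub_Iic gpdf_integrable.integrableOn gpdf_integrable.integrableOn
  rw [intervalIntegral.integral_of_le (by linarith), ← integral_Icc_eq_integral_Ioc] at h1
  rw [← h1, gcdf_neg]; ring

lemma hasDeriv_aux (t : ℝ) : HasDerivAt (fun t => -(t * gpdf t)) ((t ^ 2 - 1) * gpdf t) t := by
  have h1 : HasDerivAt (fun t : ℝ => -t ^ 2 / 2) (-t) t := by
    have := ((hasDerivAt_pow 2 t).neg.div_const 2)
    refine this.congr_deriv ?_; push_cast; ring
  have h2 : HasDerivAt (fun t : ℝ => Real.exp (-t ^ 2 / 2)) (Real.exp (-t ^ 2 / 2) * (-t)) t :=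
    h1.exp
  have h3 : HasDerivAt gpdf (-t * gpdf t) t := by
    have := h2.const_mul (Real.sqrt (2 * Real.pi))⁻¹
    refine this.congr_deriv ?_
    unfold gpdf; ring
  have h4 := ((hasDerivAt_id t).mul h3).neg
  refine h4.congr_deriv ?_
  simp only [id_eq]; ring

lemma icc_sq_gpdf (α : ℝ) (h : 0 ≤ α) :
    (∫ t in Icc (-α) α, t ^ 2 * gpdf t) = (∫ t in Icc (-α) α, gpdf t) - 2 * α * gpdf α := by
  have hint : IntervalIntegrable (fun t => (t ^ 2 - 1) * gpdf t) volume (-α) α := by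
    refine ((sq_gpdf_integrable.sub gpdf_integrable).congr ?_).intervalIntegrable
    filter_upwards with x using by simp only [Pi.sub_apply]; ring
  have h1 : (∫ t in (-α)..α, (t ^ 2 - 1) * gpdf t)
      = -(α * gpdf α) - -(-α * gpdf (-α)) :=
    intervalIntegral.integral_eq_sub_of_hasDerivAt (fun t _ => hasDeriv_aux t) hint
  rw [gpdf_neg] at h1
  rw [intervalIntegral.integral_of_le (by linarith), ← integral_Icc_eq_integral_Ioc] at h1
  have h2 : (∫ t in Icc (-α) α, (t ^ 2 - 1) * gpdf t)
      = (∫ t in Icc (-α) α, t ^ 2 * gpdf t) - ∫ t in Icc (-α) α, gpdf t := by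
    rw [← integral_sub (sq_gpdf_integrable.integrableOn) (gpdf_integrable.integrableOn)]
    congr 1; ext x; ring
  rw [h2] at h1
  linarith


/-- Fix p ∈ (0,1) and α = Φ⁻¹((1+p)/2), i.e. Φ(α) = (1+p)/2.
Among all measurable A ⊆ ℝ with Gaussian measure ∫_A φ = p, the minimum of
∫_A t²φ(t)dt equals p − 2αφ(α), attained by A = [−α, α]. -/
theorem stmt10 (p : ℝ) (hp : p ∈ Set.Ioo (0 : ℝ) 1) (α : ℝ)
    (hα : gcdf α = (1 + p) / 2) :
    (∀ A : Set ℝ, MeasurableSet A → (∫ t in A, gpdf t) = p →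
        p - 2 * α * gpdf α ≤ ∫ t in A, t ^ 2 * gpdf t) ∧
      (∫ t in Set.Icc (-α) α, gpdf t) = p ∧
      (∫ t in Set.Icc (-α) α, t ^ 2 * gpdf t) = p - 2 * α * gpdf α := by
  obtain ⟨hp0, hp1⟩ := hp
  have hgcdf0 : gcdf 0 = 1 / 2 := by
    have := gcdf_neg 0
    rw [neg_zero] at this; linarith
  have hα0 : 0 ≤ α := by
    by_contra hc
    push_neg at hc
    have := gcdf_mono hc.le
    rw [hgcdf0, hα] at this
    linarith
  set I := Icc (-α) α with hIdef
  have hI1 : (∫ t in I, gpdf t) = p := by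
    rw [hIdef, icc_gpdf α hα0, hα]; ring
  have hI2 : (∫ t in I, t ^ 2 * gpdf t) = p - 2 * α * gpdf α := by
    rw [hIdef, icc_sq_gpdf α hα0, ← hIdef, hI1]
  refine ⟨?_, hI1, hI2⟩
  intro A hA hAp
  have hImeas : MeasurableSet I := measurableSet_Icc
  -- split integrals
  have split : ∀ (f : ℝ → ℝ), Integrable f → ∀ (S T : Set ℝ), MeasurableSet S → MeasurableSet T →
      (∫ t in S, f t) = (∫ t in S ∩ T, f t) + ∫ t in S \ T, f t := by
    intro f hf S T hS hT
    rw [← setIntegral_union (disjoint_sdiff_self_right.mono_left Set.inter_subset_right)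
      (hS.diff hT) hf.integrableOn hf.integrableOn, Set.inter_union_diff]
  have hg := gpdf_integrable
  have hsq := sq_gpdf_integrable
  -- tail measures equal
  have htail : (∫ t in A \ I, gpdf t) = ∫ t in I \ A, gpdf t := by
    have e1 := split gpdf hg A I hA hImeas
    have e2 := split gpdf hg I A hImeas hA
    rw [Set.inter_comm] at e2
    rw [hAp] at e1; rw [hI1] at e2
    linarith
  -- bounds on tails
  have i1 : α ^ 2 * ∫ t in A \ I, gpdf t ≤ ∫ t in A \ I, t ^ 2 * gpdf t := by
    rw [← integral_const_mul]
    refine setIntegral_mono_on (hg.integrableOn.const_mul _) hsq.integrableOn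
      (hA.diff hImeas) ?_
    intro x hx
    have hxI : x ∉ I := hx.2
    have hgx := (gpdf_pos x).le
    have hcases : x < -α ∨ α < x := by
      rcases lt_or_ge x (-α) with h | h
      · exact Or.inl h
      · right; by_contra hc; push_neg at hc; exact hxI ⟨h, hc⟩
    have hsq2 : α ^ 2 ≤ x ^ 2 := by
      rcases hcases with h | h
      · nlinarith [mul_nonneg (by linarith : (0:ℝ) ≤ -x - α) (by linarith : (0:ℝ) ≤ -x + α)]
      · nlinarith [mul_nonneg (by linarith : (0:ℝ) ≤ x - α) (by linarith : (0:ℝ) ≤ x + α)]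
    exact mul_le_mul_of_nonneg_right hsq2 hgx
  have i2 : (∫ t in I \ A, t ^ 2 * gpdf t) ≤ α ^ 2 * ∫ t in I \ A, gpdf t := by
    rw [← integral_const_mul]
    refine setIntegral_mono_on hsq.integrableOn (hg.integrableOn.const_mul _)
      (hImeas.diff hA) ?_
    intro x hx
    obtain ⟨h1, h2⟩ := hx.1
    have hgx := (gpdf_pos x).le
    have hsq2 : x ^ 2 ≤ α ^ 2 := by
      nlinarith [mul_nonneg (by linarith : (0:ℝ) ≤ α - x) (by linarith : (0:ℝ) ≤ α + x)]
    exact mul_le_mul_of_nonneg_right hsq2 hgx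
  have e1 := split (fun t => t ^ 2 * gpdf t) hsq A I hA hImeas
  have e2 := split (fun t => t ^ 2 * gpdf t) hsq I A hImeas hA
  rw [Set.inter_comm] at e2
  rw [hI2] at e2
  rw [htail] at i1
  linarith
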